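/- Let F(X,Y), G(X,Y) be bivariate polynomials over ℂ, viewed as polynomials in Y with coefficients in ℂ[X], and let z ∈ ℂ. Then deg gcd(F(z,Y), G(z,Y)) ≤ mult(z, Res_Y(F,G)), where Res_Y is the resultant with respect to Y and mult(z,·) the multiplicity of z as a root of the resultant polynomial in ℂ[X] (with the convention that the inequality holds trivially if the resultant is identically zero). -/

import Mathlib

open Polynomial

/-- The Sylvester matrix of two polynomials f, g of respective degrees p, q:
the first q columns carry the coefficients of f, the remaining p columns those
of g. -/
def sylvester {A : Type*} [CommRing A] (f g : Polynomial A) (p q : ℕ) :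
    Matrix (Fin (q + p)) (Fin (q + p)) A :=
  Matrix.of fun i j =>
    if (j : ℕ) < q then
      (if (i : ℕ) ≤ p + j then f.coeff (p + (j : ℕ) - i) else 0)
    else
      (if (i : ℕ) ≤ j then g.coeff ((j : ℕ) - i) else 0)

/-- The resultant of two polynomials f, g of respective degrees p, q, as the
determinant of their Sylvester matrix. -/
noncomputable def resultantOf {A : Type*} [CommRing A] (f g : Polynomial A) (p q : ℕ) : A :=
  (_root_.sylvester f g p q).det

lemma sylv_sum {A : Type*} [CommRing A] (f a : A[X]) (p q i : ℕ)
    (hi : i < q + p) (ha : a.natDegree < q) :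
    ∑ j ∈ Finset.range q,
      (if i ≤ p + j then f.coeff (p + j - i) else 0) * a.coeff (q - 1 - j)
      = (a * f).coeff (q + p - 1 - i) := by
  conv_rhs => rw [a.as_sum_range' q ha]
  rw [Finset.sum_mul, finset_sum_coeff]
  rw [← Finset.sum_range_reflect]
  refine Finset.sum_congr rfl fun j hj => ?_
  rw [Finset.mem_range] at hj
  have hj' : q - 1 - (q - 1 - j) = j := by omega
  rw [hj']
  have : (monomial j (a.coeff j) * f) = C (a.coeff j) * (f * X ^ j) := by
    rw [← C_mul_X_pow_eq_monomial]; ring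
  rw [this, coeff_C_mul, coeff_mul_X_pow']
  by_cases hc : i + j ≤ p + q - 1
  · rw [if_pos (by omega), if_pos (by omega), mul_comm]
    congr 2
    omega
  · rw [if_neg (by omega), if_neg (by omega), zero_mul, mul_zero]

lemma sylv_mulVec {A : Type*} [CommRing A] (f g a b : A[X]) (p q : ℕ)
    (ha : a.natDegree < q) (hb : b.natDegree < p) (i : Fin (q + p)) :
    (_root_.sylvester f g p q).mulVec
      (fun j : Fin (q + p) => if (j : ℕ) < q then a.coeff (q - 1 - (j : ℕ))
        else b.coeff (p - 1 - ((j : ℕ) - q))) i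
      = (a * f + b * g).coeff (q + p - 1 - (i : ℕ)) := by
  have hi : (i : ℕ) < q + p := i.2
  simp only [Matrix.mulVec, dotProduct, _root_.sylvester, Matrix.of_apply]
  rw [Fin.sum_univ_add, coeff_add]
  congr 1
  · rw [← sylv_sum f a p q i hi ha, ← Fin.sum_univ_eq_sum_range]
    refine Finset.sum_congr rfl fun j _ => ?_
    simp only [Fin.coe_castAdd]
    rw [if_pos j.isLt, if_pos j.isLt]
  · rw [show q + p - 1 - (i : ℕ) = p + q - 1 - (i : ℕ) from by omega,
      ← sylv_sum g b q p i (by omega) hb, ← Fin.sum_univ_eq_sum_range]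
    refine Finset.sum_congr rfl fun j _ => ?_
    simp only [Fin.coe_natAdd]
    rw [if_neg (show ¬ (q + (j : ℕ) < q) by omega),
      if_neg (show ¬ (q + (j : ℕ) < q) by omega),
      show q + (j : ℕ) - q = (j : ℕ) from by omega]

/-- For bivariate F, G ∈ ℂ[X][Y] and z ∈ ℂ at which the leading coefficients
in Y do not vanish, deg gcd(F(z,Y), G(z,Y)) ≤ mult(z, Res_Y(F,G)), provided the
resultant Res_Y(F,G) ∈ ℂ[X] is nonzero. -/
theorem deg_gcd_le_mult_resultant
    (F G : Polynomial (Polynomial ℂ)) (p q : ℕ)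
    (hp : F.natDegree = p) (hq : G.natDegree = q) (hp1 : 1 ≤ p) (hq1 : 1 ≤ q)
    (z : ℂ)
    (hFlc : (F.leadingCoeff).eval z ≠ 0) (hGlc : (G.leadingCoeff).eval z ≠ 0)
    (hres : resultantOf F G p q ≠ 0) :
    (EuclideanDomain.gcd (F.map (evalRingHom z)) (G.map (evalRingHom z))).natDegree ≤
      (resultantOf F G p q).rootMultiplicity z := by
  set f : ℂ[X] := F.map (evalRingHom z) with hfdef
  set g : ℂ[X] := G.map (evalRingHom z) with hgdef
  set h : ℂ[X] := EuclideanDomain.gcd f g with hhdef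
  set d : ℕ := h.natDegree with hddef
  rcases Nat.eq_zero_or_pos d with hd0 | hd1
  · rw [hd0]; exact Nat.zero_le _
  -- basic degree facts
  have hf : f.natDegree = p := by
    rw [hfdef, Polynomial.natDegree_map_of_leadingCoeff_ne_zero _ (by simpa using hFlc), hp]
  have hg : g.natDegree = q := by
    rw [hgdef, Polynomial.natDegree_map_of_leadingCoeff_ne_zero _ (by simpa using hGlc), hq]
  have hf0 : f ≠ 0 := by intro h0; rw [h0, natDegree_zero] at hf; omega
  have hg0 : g ≠ 0 := by intro h0; rw [h0, natDegree_zero] at hg; omega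
  have hh0 : h ≠ 0 := by
    intro h0; exact hf0 (EuclideanDomain.gcd_eq_zero_iff.mp h0).1
  have hdvdf : h ∣ f := EuclideanDomain.gcd_dvd_left f g
  have hdvdg : h ∣ g := EuclideanDomain.gcd_dvd_right f g
  have hdp : d ≤ p := hf ▸ Polynomial.natDegree_le_of_dvd hdvdf hf0
  have hdq : d ≤ q := hg ▸ Polynomial.natDegree_le_of_dvd hdvdg hg0
  set f1 : ℂ[X] := f / h with hf1def
  set g1 : ℂ[X] := g / h with hg1def
  have hf1 : h * f1 = f := EuclideanDomain.mul_div_cancel' hh0 hdvdf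
  have hg1 : h * g1 = g := EuclideanDomain.mul_div_cancel' hh0 hdvdg
  have hf10 : f1 ≠ 0 := by intro h0; rw [h0, mul_zero] at hf1; exact hf0 hf1.symm
  have hg10 : g1 ≠ 0 := by intro h0; rw [h0, mul_zero] at hg1; exact hg0 hg1.symm
  have hf1deg : f1.natDegree = p - d := by
    have := Polynomial.natDegree_mul hh0 hf10
    rw [hf1, hf] at this; omega
  have hg1deg : g1.natDegree = q - d := by
    have := Polynomial.natDegree_mul hh0 hg10
    rw [hg1, hg] at this; omega
  -- the kernel relations
  have hab : ∀ k : ℕ, (g1 * X ^ k) * f + (-(f1 * X ^ k)) * g = 0 := by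
    intro k; rw [← hf1, ← hg1]; ring
  have hadeg : ∀ k : ℕ, k < d → (g1 * X ^ k).natDegree < q := by
    intro k hk
    rw [Polynomial.natDegree_mul hg10 (pow_ne_zero k X_ne_zero), natDegree_X_pow, hg1deg]
    omega
  have hbdeg : ∀ k : ℕ, k < d → (-(f1 * X ^ k)).natDegree < p := by
    intro k hk
    rw [natDegree_neg, Polynomial.natDegree_mul hf10 (pow_ne_zero k X_ne_zero),
      natDegree_X_pow, hf1deg]
    omega
  -- the matrix P of kernel vectors, completed with identity columns
  set P : Matrix (Fin (q + p)) (Fin (q + p)) ℂ := fun i c =>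
    if (c : ℕ) < d then
      (if (i : ℕ) < q then (g1 * X ^ (d - 1 - (c : ℕ))).coeff (q - 1 - (i : ℕ))
        else (-(f1 * X ^ (d - 1 - (c : ℕ)))).coeff (p - 1 - ((i : ℕ) - q)))
    else (if i = c then 1 else 0) with hPdef
  have hPtri : P.BlockTriangular OrderDual.toDual := by
    intro i c hic
    have hic' : (i : ℕ) < (c : ℕ) := hic
    by_cases hcd : (c : ℕ) < d
    · have hiq : (i : ℕ) < q := by omega
      rw [hPdef]
      simp only [if_pos hcd, if_pos hiq]
      rw [coeff_mul_X_pow']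
      by_cases hk : d - 1 - (c : ℕ) ≤ q - 1 - (i : ℕ)
      · rw [if_pos hk]
        apply coeff_eq_zero_of_natDegree_lt
        rw [hg1deg]; omega
      · rw [if_neg hk]
    · rw [hPdef]
      simp only [if_neg hcd]
      rw [if_neg (by exact Fin.ne_of_lt (by exact_mod_cast hic'))]
  have hPdiag : ∀ c : Fin (q + p), P c c = if (c : ℕ) < d then g1.leadingCoeff else 1 := by
    intro c
    by_cases hcd : (c : ℕ) < d
    · have hcq : (c : ℕ) < q := by omega
      rw [hPdef]
      simp only [if_pos hcd, if_pos hcq]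
      rw [coeff_mul_X_pow',
        if_pos (show d - 1 - (c : ℕ) ≤ q - 1 - (c : ℕ) from by omega),
        show q - 1 - (c : ℕ) - (d - 1 - (c : ℕ)) = q - d from by omega,
        Polynomial.leadingCoeff, hg1deg]
    · rw [hPdef]
      simp [hcd]
  have hPdet : P.det ≠ 0 := by
    rw [Matrix.det_of_lowerTriangular P hPtri]
    apply Finset.prod_ne_zero_iff.mpr
    intro c _
    rw [hPdiag]
    by_cases hcd : (c : ℕ) < d
    · rw [if_pos hcd]; exact leadingCoeff_ne_zero.mpr hg10
    · rw [if_neg hcd]; exact one_ne_zero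
  -- the Sylvester matrices
  set M : Matrix (Fin (q + p)) (Fin (q + p)) ℂ[X] := sylvester F G p q with hMdef
  set M0 : Matrix (Fin (q + p)) (Fin (q + p)) ℂ := sylvester f g p q with hM0def
  have hmap : ∀ i j, Polynomial.eval z (M i j) = M0 i j := by
    intro i j
    simp [hMdef, hM0def, _root_.sylvester, apply_ite (Polynomial.eval z), hfdef, hgdef,
      Polynomial.coeff_map]
  set N : Matrix (Fin (q + p)) (Fin (q + p)) ℂ[X] := M * (P.map C) with hNdef
  have hNcol : ∀ (i c : Fin (q + p)), (c : ℕ) < d → (X - C z) ∣ N i c := by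
    intro i c hc
    rw [dvd_iff_isRoot]
    have hvec : (fun j : Fin (q + p) => P j c) =
        (fun j : Fin (q + p) => if (j : ℕ) < q then
          (g1 * X ^ (d - 1 - (c : ℕ))).coeff (q - 1 - (j : ℕ))
          else (-(f1 * X ^ (d - 1 - (c : ℕ)))).coeff (p - 1 - ((j : ℕ) - q))) := by
      funext j; rw [hPdef]; simp only [if_pos hc]
    have hker : M0.mulVec (fun j : Fin (q + p) => P j c) i = 0 := by
      rw [hvec, hM0def, sylv_mulVec f g _ _ p q (hadeg _ (by omega)) (hbdeg _ (by omega)) i,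
        hab, coeff_zero]
    show Polynomial.eval z (N i c) = 0
    rw [hNdef, Matrix.mul_apply]
    rw [Polynomial.eval_finset_sum]
    have : ∀ j : Fin (q + p), Polynomial.eval z (M i j * (P.map C) j c) = M0 i j * P j c := by
      intro j
      rw [Polynomial.eval_mul, hmap, Matrix.map_apply, Polynomial.eval_C]
    rw [Finset.sum_congr rfl fun j _ => this j]
    exact hker
  -- divide out the columns
  set w : Fin (q + p) → ℂ[X] := fun j => if (j : ℕ) < d then (X - C z) else 1 with hwdef
  set B : Matrix (Fin (q + p)) (Fin (q + p)) ℂ[X] := fun i j =>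
    if (j : ℕ) < d then N i j / (X - C z) else N i j with hBdef
  have key : N = Matrix.of fun i j => w j * B i j := by
    refine Matrix.ext fun i j => ?_
    rw [hwdef, hBdef]
    by_cases hj : (j : ℕ) < d
    · simp only [if_pos hj, Matrix.of_apply]
      exact (EuclideanDomain.mul_div_cancel' (X_sub_C_ne_zero z) (hNcol i j hj)).symm
    · simp only [if_neg hj, Matrix.of_apply, one_mul]
  have hprod : (∏ j : Fin (q + p), w j) = (X - C z) ^ d := by
    rw [hwdef]
    rw [Fin.prod_univ_eq_prod_range (fun j => if j < d then (X - C z) else 1) (q + p)]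
    rw [Finset.prod_ite, Finset.prod_const, Finset.prod_const_one, mul_one]
    congr 1
    have : Finset.filter (fun j => j < d) (Finset.range (q + p)) = Finset.range d := by
      ext x; simp only [Finset.mem_filter, Finset.mem_range]; omega
    rw [this, Finset.card_range]
  have hNdet : N.det = (X - C z) ^ d * B.det := by
    rw [key, Matrix.det_mul_row, hprod]
  have hNdet2 : N.det = M.det * C P.det := by
    rw [hNdef, Matrix.det_mul]
    congr 1
    rw [← RingHom.mapMatrix_apply, ← RingHom.map_det]
  have hdvd : (X - C z) ^ d ∣ M.det * C P.det := by
    rw [← hNdet2, hNdet]; exact Dvd.intro _ rfl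
  have hres' : resultantOf F G p q = M.det := rfl
  rw [Polynomial.le_rootMultiplicity_iff hres, hres']
  exact (IsUnit.dvd_mul_right (isUnit_C.mpr (Ne.isUnit hPdet))).mp hdvd
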